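/- Consider an original network on n vertices: a strongly connected weighted directed graph with strictly positive weights w satisfying B.mulVec w = 0, balanced Laplacian L_b = B₀ * Matrix.diagonal w * Bᵀ, a diagonal matrix M with strictly positive diagonal entries, system matrix L = M⁻¹ * L_b, input matrix F : Matrix (Fin n) (Fin p) ℝ, and output matrix H : Matrix (Fin q) (Fin n) ℝ. Let π : Fin n → Fin r be surjective with characteristic matrix Π given by Π i c = 1 if π i = c and 0 otherwise, and set M̂ = Πᵀ * M * Π, F̂ = M̂⁻¹ * Πᵀ * (M * F), Ĥ = H * Π. Consider a reduced network: a strongly connected weighted directed graph on r vertices with strictly positive weights ŵ satisfying B̂.mulVec ŵ = 0, reduced balanced Laplacian L̂_b = B̂₀ * Matrix.diagonal ŵ * B̂ᵀ, and L̂ = M̂⁻¹ * L̂_b. Then the impulse-response error is square-integrable: the function t ↦ ‖H * Matrix.exp ℝ (-t • L) * F - Ĥ * Matrix.exp ℝ (-t • L̂) * F̂‖² is integrable on the interval [0, ∞). (This expresses that the error system belongs to H₂ for every admissible choice of reduced weights.) -/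

import Mathlib

open Matrix NormedSpace

namespace H2Aux

section Gap


variable {n : ℕ}

theorem exists_gap (d : Fin n → ℝ) (hd : ∀ i, 0 < d i) (A : Matrix (Fin n) (Fin n) ℝ)
    (hpos : ∀ x : Fin n → ℝ, x ≠ 0 → (∑ i, d i * x i) = 0 →
      0 < ∑ i, ∑ j, A i j * (x i * x j)) :
    ∃ lam > (0:ℝ), ∀ x : Fin n → ℝ, (∑ i, d i * x i) = 0 →
      lam * ∑ i, d i * x i ^ 2 ≤ ∑ i, ∑ j, A i j * (x i * x j) := by
  classical
  set Q : (Fin n → ℝ) → ℝ := fun x => ∑ i, ∑ j, A i j * (x i * x j) with hQ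
  set V : (Fin n → ℝ) → ℝ := fun x => ∑ i, d i * x i ^ 2 with hV
  have hQcont : Continuous Q := by
    apply continuous_finset_sum
    intro i _
    apply continuous_finset_sum
    intro j _
    exact continuous_const.mul ((continuous_apply i).mul (continuous_apply j))
  have hVsc : ∀ (c : ℝ) (x : Fin n → ℝ), V (c • x) = c ^ 2 * V x := by
    intro c x
    simp only [hV, Pi.smul_apply, smul_eq_mul, Finset.mul_sum]
    exact Finset.sum_congr rfl fun i _ => by ring
  have hQsc : ∀ (c : ℝ) (x : Fin n → ℝ), Q (c • x) = c ^ 2 * Q x := by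
    intro c x
    simp only [hQ, Pi.smul_apply, smul_eq_mul, Finset.mul_sum]
    exact Finset.sum_congr rfl fun i _ => Finset.sum_congr rfl fun j _ => by ring
  have hVpos : ∀ x : Fin n → ℝ, x ≠ 0 → 0 < V x := by
    intro x hx
    obtain ⟨i, hi⟩ := Function.ne_iff.mp hx
    have hi2 : x i ≠ 0 := by simpa using hi
    have hi' : 0 < d i * x i ^ 2 :=
      mul_pos (hd i) ((sq_nonneg _).lt_of_ne (Ne.symm (pow_ne_zero 2 hi2)))
    have : d i * x i ^ 2 ≤ V x :=
      Finset.single_le_sum (f := fun i => d i * x i ^ 2)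
        (fun j _ => mul_nonneg (hd j).le (sq_nonneg _)) (Finset.mem_univ i)
    linarith
  have hV0 : V 0 = 0 := by simp [hV]
  have hQ0 : Q 0 = 0 := by simp [hQ]
  set K : Set (Fin n → ℝ) := {x | (∑ i, d i * x i) = 0 ∧ V x = 1} with hK
  -- membership of normalized vectors
  have hnorm : ∀ x : Fin n → ℝ, x ≠ 0 → (∑ i, d i * x i) = 0 →
      (Real.sqrt (V x))⁻¹ • x ∈ K := by
    intro x hx hxc
    have hVx := hVpos x hx
    constructor
    · have : ∑ i, d i * ((Real.sqrt (V x))⁻¹ • x) i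
          = (Real.sqrt (V x))⁻¹ * ∑ i, d i * x i := by
        rw [Finset.mul_sum]
        exact Finset.sum_congr rfl fun i _ => by simp [mul_comm, mul_assoc, mul_left_comm]
      rw [this, hxc, mul_zero]
    · rw [hVsc]
      rw [inv_pow, Real.sq_sqrt hVx.le]
      exact inv_mul_cancel₀ hVx.ne'
  by_cases hKne : K.Nonempty
  · -- compactness
    have hKclosed : IsClosed K := by
      apply IsClosed.inter
      · exact isClosed_eq (by
          apply continuous_finset_sum; intro i _;
          exact continuous_const.mul (continuous_apply i)) continuous_const
      · exact isClosed_eq (by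
          apply continuous_finset_sum; intro i _
          exact continuous_const.mul ((continuous_apply i).pow 2)) continuous_const
    have hKbdd : Bornology.IsBounded K := by
      rw [Metric.isBounded_iff_subset_closedBall 0]
      refine ⟨Real.sqrt (∑ i, (d i)⁻¹), fun x hx => ?_⟩
      rw [Metric.mem_closedBall, dist_zero_right]
      have hb : ∀ i, ‖x i‖ ≤ Real.sqrt (∑ i, (d i)⁻¹) := by
        intro i
        have h1 : d i * x i ^ 2 ≤ V x :=
          Finset.single_le_sum (f := fun i => d i * x i ^ 2)
            (fun j _ => mul_nonneg (hd j).le (sq_nonneg _)) (Finset.mem_univ i)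
        rw [hx.2] at h1
        have h2 : x i ^ 2 ≤ (d i)⁻¹ := by
          rw [← le_div_iff₀' (hd i)] at h1
          simpa [one_div] using h1
        have h3 : (d i)⁻¹ ≤ ∑ i, (d i)⁻¹ :=
          Finset.single_le_sum (f := fun i => (d i)⁻¹)
            (fun j _ => (inv_pos.mpr (hd j)).le) (Finset.mem_univ i)
        calc ‖x i‖ = Real.sqrt (x i ^ 2) := by
              rw [Real.sqrt_sq_eq_abs]; rfl
          _ ≤ Real.sqrt (∑ i, (d i)⁻¹) := Real.sqrt_le_sqrt (h2.trans h3)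
      exact pi_norm_le_iff_of_nonneg (Real.sqrt_nonneg _) |>.mpr hb
    have hKcompact : IsCompact K := Metric.isCompact_of_isClosed_isBounded hKclosed hKbdd
    obtain ⟨x₀, hx₀K, hx₀min⟩ := hKcompact.exists_isMinOn hKne hQcont.continuousOn
    have hx₀ne : x₀ ≠ 0 := by
      intro h
      have h2 : V x₀ = 1 := hx₀K.2
      rw [h, hV0] at h2
      exact one_ne_zero h2.symm
    have hlam : 0 < Q x₀ := hpos x₀ hx₀ne hx₀K.1
    refine ⟨Q x₀, hlam, ?_⟩
    intro x hxc
    by_cases hx : x = 0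
    · subst hx; simp
    · have hVx := hVpos x hx
      have hy := hnorm x hx hxc
      have hQy : Q x₀ ≤ Q ((Real.sqrt (V x))⁻¹ • x) := hx₀min hy
      rw [hQsc, inv_pow, Real.sq_sqrt hVx.le] at hQy
      calc Q x₀ * V x ≤ ((V x)⁻¹ * Q x) * V x := by
            apply mul_le_mul_of_nonneg_right hQy hVx.le
        _ = Q x := by field_simp
  · -- the constraint set is trivial
    refine ⟨1, one_pos, ?_⟩
    intro x hxc
    by_cases hx : x = 0
    · subst hx; simp
    · exact absurd ⟨_, hnorm x hx hxc⟩ hKne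


end Gap

section Network

theorem diag_inv {k : ℕ} (v : Fin k → ℝ) (hv : ∀ i, v i ≠ 0) :
    (Matrix.diagonal v)⁻¹ = Matrix.diagonal (fun i => (v i)⁻¹) := by
  have hIU : Ring.inverse v = fun i => (v i)⁻¹ :=
    Ring.inverse_unit ⟨v, fun i => (v i)⁻¹,
      funext fun i => mul_inv_cancel₀ (hv i),
      funext fun i => inv_mul_cancel₀ (hv i)⟩
  rw [Matrix.inv_diagonal, hIU]


theorem network_props (n m : ℕ) (s t : Fin m → Fin n) (hst : ∀ k, s k ≠ t k)
    (w : Fin m → ℝ) (hw : ∀ k, 0 < w k)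
    (hconn : ∀ i j : Fin n, Relation.ReflTransGen (fun a b => ∃ k, s k = a ∧ t k = b) i j)
    (B B₀ : Matrix (Fin n) (Fin m) ℝ)
    (hB : ∀ i k, B i k = if i = s k then 1 else if i = t k then -1 else 0)
    (hB₀ : ∀ i k, B₀ i k = if i = s k then 1 else 0)
    (hbal : B.mulVec w = 0)
    (d : Fin n → ℝ) (hd : ∀ i, 0 < d i)
    (Lm : Matrix (Fin n) (Fin n) ℝ)
    (hLm : Lm = (Matrix.diagonal d)⁻¹ * (B₀ * Matrix.diagonal w * Bᵀ)) :
    (∀ j, ∑ i, d i * Lm i j = 0) ∧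
    (∀ i, ∑ j, Lm i j = 0) ∧
    (∀ x : Fin n → ℝ, x ≠ 0 → (∑ i, d i * x i) = 0 →
      0 < ∑ i, ∑ j, (d i * Lm i j + d j * Lm j i) * (x i * x j)) := by
  classical
  set Lb : Matrix (Fin n) (Fin n) ℝ := B₀ * Matrix.diagonal w * Bᵀ with hLbdef
  have hinv : (Matrix.diagonal d)⁻¹ = Matrix.diagonal (fun i => (d i)⁻¹) := by
    have hIU : Ring.inverse d = fun i => (d i)⁻¹ :=
      Ring.inverse_unit ⟨d, fun i => (d i)⁻¹,
        funext fun i => mul_inv_cancel₀ (hd i).ne',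
        funext fun i => inv_mul_cancel₀ (hd i).ne'⟩
    rw [Matrix.inv_diagonal, hIU]
  have hLbE : ∀ i j, Lb i j = ∑ k, B₀ i k * w k * B j k := by
    intro i j
    rw [hLbdef, Matrix.mul_apply]
    refine Finset.sum_congr rfl fun k _ => ?_
    rw [Matrix.mul_diagonal, Matrix.transpose_apply]
  have hLE : ∀ i j, Lm i j = (d i)⁻¹ * Lb i j := by
    intro i j
    rw [hLm, hinv, Matrix.diagonal_mul]
  have hdLE : ∀ i j, d i * Lm i j = Lb i j := by
    intro i j
    rw [hLE, ← mul_assoc, mul_inv_cancel₀ (hd i).ne', one_mul]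
  have hB' : ∀ i k, B i k = (if i = s k then (1:ℝ) else 0) - (if i = t k then 1 else 0) := by
    intro i k
    rw [hB]
    rcases eq_or_ne i (s k) with h1 | h1
    · subst h1
      simp [hst k]
    · rcases eq_or_ne i (t k) with h2 | h2
      · subst h2
        simp [h1, Ne.symm (hst k)]
      · simp [h1, h2]
  have hbal' : ∀ i, ∑ k, B i k * w k = 0 := by
    intro i
    have := congrFun hbal i
    simpa [Matrix.mulVec, dotProduct] using this
  -- column sums of B vanish
  have hsumBcol : ∀ k, ∑ i, B i k = 0 := by
    intro k
    simp only [hB']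
    rw [Finset.sum_sub_distrib]
    simp [Finset.sum_ite_eq', hst k]
  -- column sums of B₀ are one
  have hsumB₀ : ∀ k, ∑ i, B₀ i k = 1 := by
    intro k
    simp [hB₀, Finset.sum_ite_eq']
  -- row sums of Lb vanish
  have hrowLb : ∀ i, ∑ j, Lb i j = 0 := by
    intro i
    simp only [hLbE]
    rw [Finset.sum_comm]
    refine Finset.sum_eq_zero fun k _ => ?_
    rw [← Finset.mul_sum, hsumBcol k, mul_zero]
  -- column sums of Lb vanish
  have hcolLb : ∀ j, ∑ i, Lb i j = 0 := by
    intro j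
    simp only [hLbE]
    rw [Finset.sum_comm]
    have : ∀ k, ∑ i, B₀ i k * w k * B j k = w k * B j k := by
      intro k
      rw [← Finset.sum_mul, ← Finset.sum_mul, hsumB₀ k, one_mul]
    rw [Finset.sum_congr rfl fun k _ => this k]
    have : ∑ k, w k * B j k = ∑ k, B j k * w k :=
      Finset.sum_congr rfl fun k _ => mul_comm _ _
    rw [this, hbal' j]
  refine ⟨?_, ?_, ?_⟩
  · intro j
    calc ∑ i, d i * Lm i j = ∑ i, Lb i j := Finset.sum_congr rfl fun i _ => hdLE i j
      _ = 0 := hcolLb j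
  · intro i
    calc ∑ j, Lm i j = ∑ j, (d i)⁻¹ * Lb i j := Finset.sum_congr rfl fun j _ => hLE i j
      _ = (d i)⁻¹ * ∑ j, Lb i j := by rw [Finset.mul_sum]
      _ = 0 := by rw [hrowLb i, mul_zero]
  · intro x hx hxc
    -- sum over edges can be re-expressed as vertex sums
    have hS : ∀ (f : Fin n → ℝ) (e : Fin m → Fin n),
        ∑ k, w k * f (e k) = ∑ i, (∑ k, if i = e k then w k else 0) * f i := by
      intro f e
      have h1 : ∀ i, (∑ k, if i = e k then w k else 0) * f i
          = ∑ k, if i = e k then w k * f i else 0 := by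
        intro i
        rw [Finset.sum_mul]
        exact Finset.sum_congr rfl fun k _ => by split <;> simp
      calc ∑ k, w k * f (e k)
          = ∑ k, ∑ i, if i = e k then w k * f i else 0 := by
            refine Finset.sum_congr rfl fun k _ => ?_
            simp [Finset.sum_ite_eq']
        _ = ∑ i, ∑ k, if i = e k then w k * f i else 0 := Finset.sum_comm
        _ = ∑ i, (∑ k, if i = e k then w k else 0) * f i :=
            Finset.sum_congr rfl fun i _ => (h1 i).symm
    -- in/out weights coincide at each vertex
    have hw_io : ∀ i, (∑ k, if i = s k then w k else 0) = ∑ k, if i = t k then w k else 0 := by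
      intro i
      have h1 : ∀ k, B i k * w k
          = (if i = s k then w k else 0) - (if i = t k then w k else 0) := by
        intro k
        rw [hB']
        split_ifs <;> ring
      have h2 : ∑ k, ((if i = s k then w k else 0) - (if i = t k then w k else 0)) = 0 := by
        rw [← Finset.sum_congr rfl fun k _ => h1 k]
        exact hbal' i
      rw [Finset.sum_sub_distrib] at h2
      linarith
    have htransfer : ∀ f : Fin n → ℝ, ∑ k, w k * f (s k) = ∑ k, w k * f (t k) := by
      intro f
      rw [hS f s, hS f t]
      exact Finset.sum_congr rfl fun i _ => by rw [hw_io i]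
    -- edge incidence sums
    have hBx : ∀ k, ∑ j, B j k * x j = x (s k) - x (t k) := by
      intro k
      simp only [hB', sub_mul, one_mul, zero_mul]
      rw [Finset.sum_sub_distrib]
      simp [ite_mul, Finset.sum_ite_eq']
    have hB₀x : ∀ k, ∑ i, B₀ i k * x i = x (s k) := by
      intro k
      simp [hB₀, ite_mul, Finset.sum_ite_eq']
    -- quadratic form via edges
    have key1 : ∑ i, ∑ j, Lb i j * (x i * x j)
        = ∑ k, w k * (x (s k) * (x (s k) - x (t k))) := by
      have hterm : ∀ i j, Lb i j * (x i * x j)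
          = ∑ k, (B₀ i k * x i) * (w k * (B j k * x j)) := by
        intro i j
        rw [hLbE, Finset.sum_mul]
        exact Finset.sum_congr rfl fun k _ => by ring
      calc ∑ i, ∑ j, Lb i j * (x i * x j)
          = ∑ i, ∑ j, ∑ k, (B₀ i k * x i) * (w k * (B j k * x j)) :=
            Finset.sum_congr rfl fun i _ => Finset.sum_congr rfl fun j _ => hterm i j
        _ = ∑ i, ∑ k, ∑ j, (B₀ i k * x i) * (w k * (B j k * x j)) :=
            Finset.sum_congr rfl fun i _ => Finset.sum_comm
        _ = ∑ k, ∑ i, ∑ j, (B₀ i k * x i) * (w k * (B j k * x j)) := Finset.sum_comm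
        _ = ∑ k, w k * (x (s k) * (x (s k) - x (t k))) := by
            refine Finset.sum_congr rfl fun k _ => ?_
            have h1 : ∀ i : Fin n, ∑ j, (B₀ i k * x i) * (w k * (B j k * x j))
                = (B₀ i k * x i) * (w k * (x (s k) - x (t k))) := by
              intro i
              rw [← Finset.mul_sum, ← Finset.mul_sum, hBx k]
            rw [Finset.sum_congr rfl fun i _ => h1 i, ← Finset.sum_mul, hB₀x k]
            ring
    -- the symmetrized form equals twice the form
    have hQ2 : ∑ i, ∑ j, (d i * Lm i j + d j * Lm j i) * (x i * x j)
        = 2 * ∑ i, ∑ j, Lb i j * (x i * x j) := by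
      calc ∑ i, ∑ j, (d i * Lm i j + d j * Lm j i) * (x i * x j)
          = ∑ i, ∑ j, (Lb i j * (x i * x j) + Lb j i * (x i * x j)) := by
            refine Finset.sum_congr rfl fun i _ => Finset.sum_congr rfl fun j _ => ?_
            rw [hdLE i j, hdLE j i, add_mul]
        _ = (∑ i, ∑ j, Lb i j * (x i * x j)) + ∑ i, ∑ j, Lb j i * (x i * x j) := by
            simp only [Finset.sum_add_distrib]
        _ = 2 * ∑ i, ∑ j, Lb i j * (x i * x j) := by
            have h2 : ∑ i, ∑ j, Lb j i * (x i * x j) = ∑ i, ∑ j, Lb i j * (x i * x j) := by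
              rw [Finset.sum_comm]
              exact Finset.sum_congr rfl fun i _ => Finset.sum_congr rfl fun j _ => by ring
            rw [h2]
            ring
    -- the edge form is a sum of squares
    have key2 : 2 * ∑ k, w k * (x (s k) * (x (s k) - x (t k)))
        = ∑ k, w k * (x (s k) - x (t k)) ^ 2 := by
      have ht2 : ∑ k, w k * x (s k) ^ 2 = ∑ k, w k * x (t k) ^ 2 := by
        simpa using htransfer (fun i => x i ^ 2)
      have expand : ∑ k, (2 * (w k * (x (s k) * (x (s k) - x (t k))))
            - w k * (x (s k) - x (t k)) ^ 2)
          = ∑ k, (w k * x (s k) ^ 2 - w k * x (t k) ^ 2) :=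
        Finset.sum_congr rfl fun k _ => by ring
      rw [Finset.sum_sub_distrib, Finset.sum_sub_distrib] at expand
      have h2m : ∑ k, 2 * (w k * (x (s k) * (x (s k) - x (t k))))
          = 2 * ∑ k, w k * (x (s k) * (x (s k) - x (t k))) := by
        rw [Finset.mul_sum]
      rw [h2m] at expand
      linarith
    -- positivity of the sum of squares
    have hPnonneg : (0:ℝ) ≤ ∑ k, w k * (x (s k) - x (t k)) ^ 2 :=
      Finset.sum_nonneg fun k _ => mul_nonneg (hw k).le (sq_nonneg _)
    have hPne : ∑ k, w k * (x (s k) - x (t k)) ^ 2 ≠ 0 := by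
      intro hP0
      have hall0 : ∀ k ∈ Finset.univ, w k * (x (s k) - x (t k)) ^ 2 = 0 :=
        (Finset.sum_eq_zero_iff_of_nonneg
          (fun k _ => mul_nonneg (hw k).le (sq_nonneg _))).mp hP0
      have heq : ∀ k, x (s k) = x (t k) := by
        intro k
        have h1 := hall0 k (Finset.mem_univ k)
        have h2 : (x (s k) - x (t k)) ^ 2 = 0 :=
          (mul_eq_zero.mp h1).resolve_left (hw k).ne'
        have h3 : x (s k) - x (t k) = 0 := by
          exact pow_eq_zero_iff (n := 2) (by norm_num) |>.mp h2
        linarith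
      -- x is constant along walks, hence constant
      have hwalk : ∀ i j : Fin n, x i = x j := by
        intro i j
        induction hconn i j with
        | refl => rfl
        | tail hab hrel ih =>
          obtain ⟨k, hk1, hk2⟩ := hrel
          rw [ih, ← hk2, ← heq k, hk1]
      obtain ⟨i₀, hi₀⟩ := Function.ne_iff.mp hx
      have hi2 : x i₀ ≠ 0 := by simpa using hi₀
      have hsum : ∑ i, d i * x i = (∑ i, d i) * x i₀ := by
        rw [Finset.sum_mul]
        exact Finset.sum_congr rfl fun i _ => by rw [hwalk i i₀]
      have hdpos : 0 < ∑ i, d i :=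
        Finset.sum_pos (fun i _ => hd i) ⟨i₀, Finset.mem_univ i₀⟩
      rw [hsum] at hxc
      exact hi2 ((mul_eq_zero.mp hxc).resolve_left hdpos.ne')
    rw [hQ2, key1, key2]
    exact hPnonneg.lt_of_ne (Ne.symm hPne)


end Network

section Analytic

attribute [local instance] Matrix.linftyOpNormedAddCommGroup Matrix.linftyOpNormedSpace
  Matrix.linftyOpNormedRing Matrix.linftyOpNormedAlgebra


variable {n : ℕ}

noncomputable def entryCLM (i j : Fin n) : Matrix (Fin n) (Fin n) ℝ →L[ℝ] ℝ :=
  LinearMap.toContinuousLinearMap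
    { toFun := fun A => A i j
      map_add' := fun _ _ => rfl
      map_smul' := fun _ _ => rfl }

theorem hasDerivAt_expEntry (L : Matrix (Fin n) (Fin n) ℝ) (i j : Fin n) (t : ℝ) :
    HasDerivAt (fun u : ℝ => NormedSpace.exp ((-u) • L) i j)
      (-((NormedSpace.exp ((-t) • L) * L) i j)) t := by
  have h1 : HasDerivAt (fun u : ℝ => NormedSpace.exp (u • L)) (NormedSpace.exp ((-t) • L) * L) (-t) :=
    hasDerivAt_exp_smul_const L (-t)
  have h2 : HasDerivAt (fun u : ℝ => -u) (-1 : ℝ) t := (hasDerivAt_id t).neg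
  have h3 : HasDerivAt (fun u : ℝ => NormedSpace.exp ((-u) • L))
      ((-1 : ℝ) • (NormedSpace.exp ((-t) • L) * L)) t := h1.scomp t h2
  have h4 := ((entryCLM i j).hasFDerivAt.comp_hasDerivAt t h3)
  have h5 : (-((NormedSpace.exp ((-t) • L) * L) i j))
      = entryCLM i j ((-1 : ℝ) • (NormedSpace.exp ((-t) • L) * L)) := by
    show _ = ((-1 : ℝ) • (NormedSpace.exp ((-t) • L) * L)) i j
    simp
  rw [h5]
  exact h4

theorem continuous_expEntry (L : Matrix (Fin n) (Fin n) ℝ) (i j : Fin n) :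
    Continuous (fun u : ℝ => NormedSpace.exp ((-u) • L) i j) :=
  Differentiable.continuous (fun t => (hasDerivAt_expEntry L i j t).differentiableAt)

/-- If `L * J = 0` then `exp ((-t) • L) * J = J`. -/
theorem exp_mul_eq_of_mul_eq_zero (L J : Matrix (Fin n) (Fin n) ℝ) (hLJ : L * J = 0)
    (t : ℝ) : NormedSpace.exp ((-t) • L) * J = J := by
  have key : ∀ i j : Fin n, ∀ u : ℝ, (NormedSpace.exp ((-u) • L) * J) i j = J i j := by
    intro i j
    have hder : ∀ u : ℝ, HasDerivAt (fun v : ℝ => (NormedSpace.exp ((-v) • L) * J) i j) 0 u := by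
      intro u
      have : ∀ v : ℝ, (NormedSpace.exp ((-v) • L) * J) i j = ∑ k, NormedSpace.exp ((-v) • L) i k * J k j := by
        intro v; rw [Matrix.mul_apply]
      have h0 : HasDerivAt (fun v : ℝ => ∑ k, NormedSpace.exp ((-v) • L) i k * J k j)
          (∑ k, -((NormedSpace.exp ((-u) • L) * L) i k) * J k j) u :=
        HasDerivAt.fun_sum fun k _ => (hasDerivAt_expEntry L i k u).mul_const _
      have hz : (∑ k, -((NormedSpace.exp ((-u) • L) * L) i k) * J k j) = 0 := by
        have : (∑ k, -((NormedSpace.exp ((-u) • L) * L) i k) * J k j)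
            = -((NormedSpace.exp ((-u) • L) * L * J) i j) := by
          rw [Matrix.mul_apply]
          simp [Finset.sum_neg_distrib]
        rw [this, mul_assoc, hLJ, Matrix.mul_zero]
        simp
      rw [hz] at h0
      exact h0.congr_deriv rfl |>.congr_of_eventuallyEq (by filter_upwards with v; rw [this v])
    intro u
    have hconst : (fun v : ℝ => (NormedSpace.exp ((-v) • L) * J) i j) u
        = (fun v : ℝ => (NormedSpace.exp ((-v) • L) * J) i j) 0 :=
      is_const_of_deriv_eq_zero
        (fun v => (hder v).differentiableAt) (fun v => (hder v).deriv) u 0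
    simpa using hconst.trans (by simp)
  ext i j
  exact key i j t






theorem decay (d : Fin n → ℝ) (hd : ∀ i, 0 < d i) (L : Matrix (Fin n) (Fin n) ℝ)
    (hcol : ∀ j, ∑ i, d i * L i j = 0)
    (hQ : ∀ x : Fin n → ℝ, x ≠ 0 → (∑ i, d i * x i) = 0 →
      0 < ∑ i, ∑ j, (d i * L i j + d j * L j i) * (x i * x j)) :
    ∃ lam > (0:ℝ), ∀ x : Fin n → ℝ, (∑ i, d i * x i) = 0 → ∀ t : ℝ, 0 ≤ t →
      ∑ i, d i * ((NormedSpace.exp ((-t) • L)).mulVec x i) ^ 2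
        ≤ Real.exp (-(lam * t)) * ∑ i, d i * x i ^ 2 := by
  classical
  obtain ⟨lam, hlam, hgap⟩ := exists_gap d hd
    (Matrix.of fun i j => d i * L i j + d j * L j i) hQ
  refine ⟨lam, hlam, ?_⟩
  intro x hxc t ht
  set g : ℝ → Fin n → ℝ := fun u => (NormedSpace.exp ((-u) • L)).mulVec x with hg
  -- derivative of each coordinate
  have hgd : ∀ (u : ℝ) (i : Fin n),
      HasDerivAt (fun v : ℝ => g v i) (-(L.mulVec (g u) i)) u := by
    intro u i
    have h0 : HasDerivAt (fun v : ℝ => ∑ j, NormedSpace.exp ((-v) • L) i j * x j)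
        (∑ j, -((NormedSpace.exp ((-u) • L) * L) i j) * x j) u :=
      HasDerivAt.fun_sum fun j _ => (hasDerivAt_expEntry L i j u).mul_const _
    have he : ∀ v : ℝ, g v i = ∑ j, NormedSpace.exp ((-v) • L) i j * x j := by
      intro v; simp [hg, Matrix.mulVec, dotProduct]
    have hde : (∑ j, -((NormedSpace.exp ((-u) • L) * L) i j) * x j) = -(L.mulVec (g u) i) := by
      have hcomm : L * NormedSpace.exp ((-u) • L) = NormedSpace.exp ((-u) • L) * L := by
        have : Commute L ((-u) • L) := (Commute.refl L).smul_right _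
        exact (this.exp_right).eq
      calc (∑ j, -((NormedSpace.exp ((-u) • L) * L) i j) * x j)
          = -(((NormedSpace.exp ((-u) • L) * L).mulVec x) i) := by
            simp [Matrix.mulVec, dotProduct, Finset.sum_neg_distrib]
        _ = -(((L * NormedSpace.exp ((-u) • L)).mulVec x) i) := by rw [hcomm]
        _ = -(L.mulVec (g u) i) := by rw [← Matrix.mulVec_mulVec]
    rw [hde] at h0
    exact h0.congr_of_eventuallyEq (by filter_upwards with v; rw [he v])
  -- the linear constraint is preserved
  have hgc : ∀ u : ℝ, (∑ i, d i * g u i) = 0 := by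
    have hder : ∀ u : ℝ, HasDerivAt (fun v : ℝ => ∑ i, d i * g v i) 0 u := by
      intro u
      have h0 : HasDerivAt (fun v : ℝ => ∑ i, d i * g v i)
          (∑ i, d i * -(L.mulVec (g u) i)) u :=
        HasDerivAt.fun_sum fun i _ => (hgd u i).const_mul _
      have hz : (∑ i, d i * -(L.mulVec (g u) i)) = 0 := by
        have : (∑ i, d i * -(L.mulVec (g u) i))
            = -∑ j, (∑ i, d i * L i j) * g u j := by
          simp only [Matrix.mulVec, dotProduct, mul_neg, Finset.mul_sum,
            ← Finset.sum_neg_distrib]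
          rw [Finset.sum_comm]
          refine Finset.sum_congr rfl fun j _ => ?_
          rw [Finset.sum_mul, ← Finset.sum_neg_distrib]
          exact Finset.sum_congr rfl fun i _ => by ring
        rw [this]
        simp [hcol]
      rw [hz] at h0
      exact h0
    have hconst : ∀ u : ℝ, (∑ i, d i * g u i) = (∑ i, d i * g 0 i) := by
      intro u
      exact is_const_of_deriv_eq_zero (fun v => (hder v).differentiableAt)
        (fun v => (hder v).deriv) u 0
    intro u
    rw [hconst u]
    have : g 0 = x := by simp [hg]
    rw [this, hxc]
  -- energy function
  set Vt : ℝ → ℝ := fun u => ∑ i, d i * (g u i) ^ 2 with hVt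
  set D : ℝ → ℝ := fun u => ∑ i, d i * (2 * g u i * -(L.mulVec (g u) i)) with hD
  have hVder : ∀ u : ℝ, HasDerivAt Vt (D u) u := by
    intro u
    apply HasDerivAt.fun_sum
    intro i _
    have h1 := ((hgd u i).pow 2).const_mul (d i)
    refine h1.congr_deriv ?_
    push_cast
    ring
  have expand : ∀ (u : ℝ) (i : Fin n), d i * (2 * g u i * -(L.mulVec (g u) i))
      = ∑ j, (-2) * ((d i * L i j) * (g u i * g u j)) := by
    intro u i
    simp only [Matrix.mulVec, dotProduct, mul_neg, Finset.mul_sum,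
      ← Finset.sum_neg_distrib]
    exact Finset.sum_congr rfl fun j _ => by ring
  have hVle : ∀ u : ℝ, D u ≤ -(lam * Vt u) := by
    intro u
    have hgu := hgap (g u) (hgc u)
    simp only [Matrix.of_apply] at hgu
    have hDeq : D u = -∑ i, ∑ j, (d i * L i j + d j * L j i) * (g u i * g u j) := by
      have h1 : ∑ i, ∑ j, (d i * L i j + d j * L j i) * (g u i * g u j)
          = (∑ i, ∑ j, (d i * L i j) * (g u i * g u j))
            + ∑ i, ∑ j, (d j * L j i) * (g u i * g u j) := by
        simp only [add_mul, Finset.sum_add_distrib]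
      have h2 : ∑ i, ∑ j, (d j * L j i) * (g u i * g u j)
          = ∑ i, ∑ j, (d i * L i j) * (g u i * g u j) := by
        rw [Finset.sum_comm]
        exact Finset.sum_congr rfl fun i _ => Finset.sum_congr rfl fun j _ => by ring
      have h3 : D u = ∑ i, ∑ j, (-2) * ((d i * L i j) * (g u i * g u j)) := by
        rw [hD]
        exact Finset.sum_congr rfl fun i _ => expand u i
      have h4 : ∑ i, ∑ j, (-2 : ℝ) * ((d i * L i j) * (g u i * g u j))
          = (-2) * ∑ i, ∑ j, (d i * L i j) * (g u i * g u j) := by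
        rw [Finset.mul_sum]
        exact Finset.sum_congr rfl fun i _ => (Finset.mul_sum _ _ _).symm
      rw [h3, h1, h2, h4]
      ring
    rw [hDeq]
    rw [neg_le_neg_iff]
    exact hgu
  set W : ℝ → ℝ := fun u => Real.exp (lam * u) * Vt u with hW
  have hWder : ∀ u : ℝ, HasDerivAt W
      (Real.exp (lam * u) * lam * Vt u + Real.exp (lam * u) * D u) u := by
    intro u
    have he : HasDerivAt (fun v : ℝ => Real.exp (lam * v)) (Real.exp (lam * u) * lam) u := by
      have h1 := (Real.hasDerivAt_exp (lam * u)).comp u ((hasDerivAt_id u).const_mul lam)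
      simpa [Function.comp_def, mul_comm] using h1
    exact he.mul (hVder u)
  have hWle : ∀ u : ℝ, Real.exp (lam * u) * lam * Vt u + Real.exp (lam * u) * D u ≤ 0 := by
    intro u
    have h1 := hVle u
    have he := Real.exp_pos (lam * u)
    nlinarith [mul_le_mul_of_nonneg_left h1 he.le]
  have hWanti : Antitone W :=
    antitone_of_deriv_nonpos (fun u => (hWder u).differentiableAt)
      (fun u => by rw [(hWder u).deriv]; exact hWle u)
  have hfin : W t ≤ W 0 := hWanti ht
  have h0 : W 0 = ∑ i, d i * x i ^ 2 := by
    have hg0 : g 0 = x := by simp [hg]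
    simp [hW, hVt, hg0]
  rw [h0] at hfin
  have hepos := Real.exp_pos (lam * t)
  have hfinal : Vt t ≤ Real.exp (-(lam * t)) * ∑ i, d i * x i ^ 2 := by
    rw [Real.exp_neg]
    rw [hW] at hfin
    calc Vt t = (Real.exp (lam * t))⁻¹ * (Real.exp (lam * t) * Vt t) := by
          field_simp
      _ ≤ (Real.exp (lam * t))⁻¹ * ∑ i, d i * x i ^ 2 :=
          mul_le_mul_of_nonneg_left hfin (inv_nonneg.mpr hepos.le)
  exact hfinal







theorem sqrt_exp_eq (y : ℝ) : Real.sqrt (Real.exp y) = Real.exp (y / 2) := by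
  have h : Real.exp y = Real.exp (y / 2) ^ 2 := by
    rw [sq, ← Real.exp_add]
    ring_nf
  rw [h, Real.sqrt_sq (Real.exp_pos _).le]

theorem triple_apply {p q : ℕ} (H : Matrix (Fin q) (Fin n) ℝ) (X : Matrix (Fin n) (Fin n) ℝ)
    (F : Matrix (Fin n) (Fin p) ℝ) (a : Fin q) (b : Fin p) :
    (H * X * F) a b = ∑ i, ∑ j, H a i * X i j * F j b := by
  rw [Matrix.mul_apply]
  calc ∑ j, (H * X) a j * F j b
      = ∑ j, ∑ i, H a i * X i j * F j b := by
        refine Finset.sum_congr rfl fun j _ => ?_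
        rw [Matrix.mul_apply, Finset.sum_mul]
    _ = ∑ i, ∑ j, H a i * X i j * F j b := Finset.sum_comm

theorem system_bound (p q : ℕ) (hn : 0 < n) (d : Fin n → ℝ) (hd : ∀ i, 0 < d i)
    (L : Matrix (Fin n) (Fin n) ℝ)
    (hcol : ∀ j, ∑ i, d i * L i j = 0) (hrow : ∀ i, ∑ j, L i j = 0)
    (hQ : ∀ x : Fin n → ℝ, x ≠ 0 → (∑ i, d i * x i) = 0 →
      0 < ∑ i, ∑ j, (d i * L i j + d j * L j i) * (x i * x j))
    (H : Matrix (Fin q) (Fin n) ℝ) (F : Matrix (Fin n) (Fin p) ℝ) :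
    ∃ lam > (0:ℝ), ∃ C : Fin q → Fin p → ℝ, (∀ a b, 0 ≤ C a b) ∧
      ∀ (a : Fin q) (b : Fin p) (t : ℝ), 0 ≤ t →
        |(H * NormedSpace.exp ((-t) • L) * F) a b
            - (H * ((Matrix.of fun _ j => d j / ∑ i, d i) : Matrix (Fin n) (Fin n) ℝ) * F) a b|
          ≤ C a b * Real.exp (-(lam * t)) := by
  classical
  obtain ⟨lam0, hlam0, hdec⟩ := decay d hd L hcol hQ
  have hSd : 0 < ∑ i, d i :=
    Finset.sum_pos (fun i _ => hd i) ⟨⟨0, hn⟩, Finset.mem_univ _⟩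
  set J : Matrix (Fin n) (Fin n) ℝ := (Matrix.of fun _ j => d j / ∑ i, d i) with hJ
  have hLJ : L * J = 0 := by
    ext i j
    rw [Matrix.mul_apply]
    simp only [hJ, Matrix.of_apply, Matrix.zero_apply]
    rw [← Finset.sum_mul, hrow i, zero_mul]
  have hexpJ : ∀ t : ℝ, NormedSpace.exp ((-t) • L) * J = J :=
    fun t => exp_mul_eq_of_mul_eq_zero L J hLJ t
  set v : Fin n → Fin n → ℝ := fun j i => (if i = j then 1 else 0) - d j / ∑ i, d i with hv
  have hvc : ∀ j, ∑ i, d i * v j i = 0 := by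
    intro j
    simp only [hv, mul_sub, Finset.sum_sub_distrib, mul_ite, mul_one, mul_zero]
    rw [Finset.sum_ite_eq' Finset.univ j d]
    rw [← Finset.sum_mul]
    simp only [Finset.mem_univ, if_true]
    field_simp
    simp
  have hEntry : ∀ (t : ℝ) (i j : Fin n),
      NormedSpace.exp ((-t) • L) i j - J i j = (NormedSpace.exp ((-t) • L)).mulVec (v j) i := by
    intro t i j
    have h1 : (NormedSpace.exp ((-t) • L)).mulVec (v j) i
        = (∑ k, NormedSpace.exp ((-t) • L) i k * (if k = j then 1 else 0))
          - ∑ k, NormedSpace.exp ((-t) • L) i k * (d j / ∑ i, d i) := by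
      simp only [Matrix.mulVec, dotProduct, hv, mul_sub, Finset.sum_sub_distrib]
    have h2 : (∑ k, NormedSpace.exp ((-t) • L) i k * (if k = j then 1 else 0))
        = NormedSpace.exp ((-t) • L) i j := by
      simp [mul_ite, Finset.sum_ite_eq']
    have h3 : (∑ k, NormedSpace.exp ((-t) • L) i k * (d j / ∑ i, d i))
        = (NormedSpace.exp ((-t) • L) * J) i j := by
      rw [Matrix.mul_apply]
      rfl
    rw [h1, h2, h3, hexpJ t]
  set Kc : Fin n → Fin n → ℝ :=
    fun i j => Real.sqrt ((d i)⁻¹ * ∑ i', d i' * (v j i') ^ 2) with hKc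
  have hEb : ∀ (t : ℝ), 0 ≤ t → ∀ (i j : Fin n),
      |NormedSpace.exp ((-t) • L) i j - J i j| ≤ Kc i j * Real.exp (-(lam0 / 2 * t)) := by
    intro t ht i j
    have hdq := hdec (v j) (hvc j) t ht
    have hone : d i * ((NormedSpace.exp ((-t) • L)).mulVec (v j) i) ^ 2
        ≤ Real.exp (-(lam0 * t)) * ∑ i', d i' * (v j i') ^ 2 := by
      refine le_trans ?_ hdq
      exact Finset.single_le_sum
        (f := fun i' => d i' * ((NormedSpace.exp ((-t) • L)).mulVec (v j) i') ^ 2)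
        (fun i' _ => mul_nonneg (hd i').le (sq_nonneg _)) (Finset.mem_univ i)
    have hsq : ((NormedSpace.exp ((-t) • L)).mulVec (v j) i) ^ 2
        ≤ (d i)⁻¹ * (∑ i', d i' * (v j i') ^ 2) * Real.exp (-(lam0 * t)) := by
      rw [← le_div_iff₀' (hd i)] at hone
      calc ((NormedSpace.exp ((-t) • L)).mulVec (v j) i) ^ 2
          ≤ (Real.exp (-(lam0 * t)) * ∑ i', d i' * (v j i') ^ 2) / d i := hone
        _ = (d i)⁻¹ * (∑ i', d i' * (v j i') ^ 2) * Real.exp (-(lam0 * t)) := by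
            field_simp
    rw [hEntry t i j]
    have hVj : 0 ≤ (d i)⁻¹ * ∑ i', d i' * (v j i') ^ 2 := by
      apply mul_nonneg (inv_nonneg.mpr (hd i).le)
      exact Finset.sum_nonneg fun i' _ => mul_nonneg (hd i').le (sq_nonneg _)
    calc |(NormedSpace.exp ((-t) • L)).mulVec (v j) i|
        = Real.sqrt (((NormedSpace.exp ((-t) • L)).mulVec (v j) i) ^ 2) := by
          rw [Real.sqrt_sq_eq_abs]
      _ ≤ Real.sqrt ((d i)⁻¹ * (∑ i', d i' * (v j i') ^ 2) * Real.exp (-(lam0 * t))) :=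
          Real.sqrt_le_sqrt hsq
      _ = Kc i j * Real.exp (-(lam0 / 2 * t)) := by
          rw [Real.sqrt_mul hVj, sqrt_exp_eq, hKc]
          congr 2
          ring
  refine ⟨lam0 / 2, by positivity, fun a b => ∑ i, ∑ j, |H a i| * Kc i j * |F j b|,
    fun a b => Finset.sum_nonneg fun i _ => Finset.sum_nonneg fun j _ =>
      mul_nonneg (mul_nonneg (abs_nonneg _) (Real.sqrt_nonneg _)) (abs_nonneg _), ?_⟩
  intro a b t ht
  have hdiff : (H * NormedSpace.exp ((-t) • L) * F) a b - (H * J * F) a b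
      = ∑ i, ∑ j, H a i * (NormedSpace.exp ((-t) • L) i j - J i j) * F j b := by
    rw [triple_apply, triple_apply, ← Finset.sum_sub_distrib]
    refine Finset.sum_congr rfl fun i _ => ?_
    rw [← Finset.sum_sub_distrib]
    exact Finset.sum_congr rfl fun j _ => by ring
  rw [hdiff]
  calc |∑ i, ∑ j, H a i * (NormedSpace.exp ((-t) • L) i j - J i j) * F j b|
      ≤ ∑ i, |∑ j, H a i * (NormedSpace.exp ((-t) • L) i j - J i j) * F j b| :=
        Finset.abs_sum_le_sum_abs _ _
    _ ≤ ∑ i, ∑ j, |H a i * (NormedSpace.exp ((-t) • L) i j - J i j) * F j b| :=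
        Finset.sum_le_sum fun i _ => Finset.abs_sum_le_sum_abs _ _
    _ ≤ ∑ i, ∑ j, |H a i| * Kc i j * |F j b| * Real.exp (-(lam0 / 2 * t)) := by
        refine Finset.sum_le_sum fun i _ => Finset.sum_le_sum fun j _ => ?_
        rw [abs_mul, abs_mul]
        calc |H a i| * |NormedSpace.exp ((-t) • L) i j - J i j| * |F j b|
            ≤ |H a i| * (Kc i j * Real.exp (-(lam0 / 2 * t))) * |F j b| := by
              apply mul_le_mul_of_nonneg_right _ (abs_nonneg _)
              exact mul_le_mul_of_nonneg_left (hEb t ht i j) (abs_nonneg _)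
          _ = |H a i| * Kc i j * |F j b| * Real.exp (-(lam0 / 2 * t)) := by ring
    _ = (∑ i, ∑ j, |H a i| * Kc i j * |F j b|) * Real.exp (-(lam0 / 2 * t)) := by
        rw [Finset.sum_mul]
        refine Finset.sum_congr rfl fun i _ => ?_
        rw [Finset.sum_mul]


end Analytic

end H2Aux

attribute [local instance] Matrix.frobeniusNormedAddCommGroup

namespace H2Aux

theorem frob_sq {q p : ℕ} (X : Matrix (Fin q) (Fin p) ℝ) :
    ‖X‖ ^ 2 = ∑ a, ∑ b, (X a b) ^ 2 := by
  have h1 : ∑ a, ∑ b, ‖X a b‖ ^ (2:ℝ) = ∑ a, ∑ b, (X a b) ^ 2 := by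
    refine Finset.sum_congr rfl fun a _ => Finset.sum_congr rfl fun b _ => ?_
    rw [Real.rpow_two, Real.norm_eq_abs, sq_abs]
  rw [Matrix.frobenius_norm_def, h1]
  have hnn : (0:ℝ) ≤ ∑ a, ∑ b, (X a b) ^ 2 := by positivity
  rw [← Real.rpow_natCast (_ ^ (1/2:ℝ)) 2, ← Real.rpow_mul hnn]
  norm_num

end H2Aux

open Matrix NormedSpace

attribute [local instance] Matrix.frobeniusNormedAddCommGroup

/-- For any clustering of a strongly connected, balanced diffusively coupled
network and any admissible (balanced, positive) choice of reduced edge weights, the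
impulse-response error between the original and reduced network systems is
square-integrable on `[0, ∞)`, i.e. the error system belongs to `H₂`. -/
theorem error_system_in_H2
    -- original network: a strongly connected, balanced weighted digraph on `n` vertices
    (n m p q r : ℕ) (s t : Fin m → Fin n) (hst : ∀ k, s k ≠ t k)
    (w : Fin m → ℝ) (hw : ∀ k, 0 < w k)
    (hconn : ∀ i j : Fin n, Relation.ReflTransGen (fun a b => ∃ k, s k = a ∧ t k = b) i j)
    (B B₀ : Matrix (Fin n) (Fin m) ℝ)
    (hB : ∀ i k, B i k = if i = s k then 1 else if i = t k then -1 else 0)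
    (hB₀ : ∀ i k, B₀ i k = if i = s k then 1 else 0)
    (hbal : B.mulVec w = 0)
    (Lb : Matrix (Fin n) (Fin n) ℝ) (hLb : Lb = B₀ * Matrix.diagonal w * Bᵀ)
    (d : Fin n → ℝ) (hd : ∀ i, 0 < d i)
    (M : Matrix (Fin n) (Fin n) ℝ) (hM : M = Matrix.diagonal d)
    (L : Matrix (Fin n) (Fin n) ℝ) (hL : L = M⁻¹ * Lb)
    (F : Matrix (Fin n) (Fin p) ℝ) (H : Matrix (Fin q) (Fin n) ℝ)
    -- the clustering and the reduced input/output matrices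
    (c : Fin n → Fin r) (hc : Function.Surjective c)
    (Pi : Matrix (Fin n) (Fin r) ℝ)
    (hPi : ∀ i a, Pi i a = if c i = a then 1 else 0)
    (Mhat : Matrix (Fin r) (Fin r) ℝ) (hMhat : Mhat = Piᵀ * M * Pi)
    (Fhat : Matrix (Fin r) (Fin p) ℝ) (hFhat : Fhat = Mhat⁻¹ * Piᵀ * (M * F))
    (Hhat : Matrix (Fin q) (Fin r) ℝ) (hHhat : Hhat = H * Pi)
    -- reduced network: a strongly connected, balanced weighted digraph on `r` vertices
    (mr : ℕ) (sr tr : Fin mr → Fin r) (hstr : ∀ k, sr k ≠ tr k)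
    (what : Fin mr → ℝ) (hwhat : ∀ k, 0 < what k)
    (hconnr : ∀ i j : Fin r, Relation.ReflTransGen (fun a b => ∃ k, sr k = a ∧ tr k = b) i j)
    (Bhat Bhat₀ : Matrix (Fin r) (Fin mr) ℝ)
    (hBhat : ∀ i k, Bhat i k = if i = sr k then 1 else if i = tr k then -1 else 0)
    (hBhat₀ : ∀ i k, Bhat₀ i k = if i = sr k then 1 else 0)
    (hbalr : Bhat.mulVec what = 0)
    (Lbhat : Matrix (Fin r) (Fin r) ℝ)
    (hLbhat : Lbhat = Bhat₀ * Matrix.diagonal what * Bhatᵀ)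
    (Lhat : Matrix (Fin r) (Fin r) ℝ) (hLhat : Lhat = Mhat⁻¹ * Lbhat) :
    MeasureTheory.IntegrableOn
      (fun τ : ℝ =>
        ‖H * NormedSpace.exp ((-τ) • L) * F - Hhat * NormedSpace.exp ((-τ) • Lhat) * Fhat‖ ^ 2)
      (Set.Ici 0) := by
  classical
  rcases Nat.eq_zero_or_pos n with hn0 | hn
  · -- degenerate case : no vertices
    subst hn0
    have hre : IsEmpty (Fin r) := ⟨fun b => by obtain ⟨a, -⟩ := hc b; exact a.elim0⟩
    have hzero : ∀ τ : ℝ,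
        H * NormedSpace.exp ((-τ) • L) * F - Hhat * NormedSpace.exp ((-τ) • Lhat) * Fhat = 0 := by
      intro τ
      ext a b
      rw [Matrix.sub_apply, H2Aux.triple_apply, H2Aux.triple_apply]
      simp
    have heq : (fun τ : ℝ =>
        ‖H * NormedSpace.exp ((-τ) • L) * F - Hhat * NormedSpace.exp ((-τ) • Lhat) * Fhat‖ ^ 2)
        = fun _ : ℝ => (0:ℝ) := by
      funext τ
      rw [hzero τ]
      simp
    rw [heq]
    exact MeasureTheory.integrableOn_zero
  · -- main case
    -- reduced vertex weights
    set dh : Fin r → ℝ := fun b => ∑ i, if c i = b then d i else 0 with hdh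
    have hdhnn : ∀ (b : Fin r) (i : Fin n), 0 ≤ if c i = b then d i else 0 := by
      intro b i
      by_cases h : c i = b <;> simp [h, (hd i).le]
    have hdhpos : ∀ b, 0 < dh b := by
      intro b
      obtain ⟨i0, hi0⟩ := hc b
      calc (0:ℝ) < d i0 := hd i0
        _ = if c i0 = b then d i0 else 0 := by rw [if_pos hi0]
        _ ≤ ∑ i, if c i = b then d i else 0 :=
            Finset.single_le_sum (fun i _ => hdhnn b i) (Finset.mem_univ i0)
        _ = dh b := rfl
    -- the reduced mass matrix is diagonal
    have hMhatdiag : Mhat = Matrix.diagonal dh := by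
      rw [hMhat, hM]
      ext a b
      rw [Matrix.mul_apply]
      have hterm : ∀ k, (Piᵀ * Matrix.diagonal d) a k * Pi k b
          = if c k = a ∧ c k = b then d k else 0 := by
        intro k
        rw [Matrix.mul_diagonal, Matrix.transpose_apply, hPi, hPi]
        by_cases h1 : c k = a <;> by_cases h2 : c k = b <;> simp [h1, h2]
      rw [Finset.sum_congr rfl fun k _ => hterm k]
      by_cases hab : a = b
      · subst hab
        rw [Matrix.diagonal_apply_eq, hdh]
        refine Finset.sum_congr rfl fun k _ => ?_
        by_cases h : c k = a <;> simp [h]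
      · rw [Matrix.diagonal_apply_ne _ hab]
        refine Finset.sum_eq_zero fun k _ => ?_
        by_cases h1 : c k = a
        · by_cases h2 : c k = b
          · exact absurd (h1.symm.trans h2) hab
          · simp [h2]
        · simp [h1]
    -- original network properties and bound
    obtain ⟨hcol1, hrow1, hQ1⟩ := H2Aux.network_props n m s t hst w hw hconn B B₀ hB hB₀
      hbal d hd L (by rw [hL, hM, hLb])
    obtain ⟨lam1, hlam1, C1, hC1nn, hC1⟩ :=
      H2Aux.system_bound p q hn d hd L hcol1 hrow1 hQ1 H F
    -- reduced network properties and bound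
    have hr : 0 < r := Fin.pos_iff_nonempty.mpr ⟨c ⟨0, hn⟩⟩
    obtain ⟨hcol2, hrow2, hQ2⟩ := H2Aux.network_props r mr sr tr hstr what hwhat hconnr
      Bhat Bhat₀ hBhat hBhat₀ hbalr dh hdhpos Lhat (by rw [hLhat, hLbhat, hMhatdiag])
    obtain ⟨lam2, hlam2, C2, hC2nn, hC2⟩ :=
      H2Aux.system_bound p q hr dh hdhpos Lhat hcol2 hrow2 hQ2 Hhat Fhat
    -- total masses agree
    have hSdh : (∑ b, dh b) = ∑ i, d i := by
      calc ∑ b, dh b = ∑ b, ∑ i, if c i = b then d i else 0 := rfl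
        _ = ∑ i, ∑ b, if c i = b then d i else 0 := Finset.sum_comm
        _ = ∑ i, d i := Finset.sum_congr rfl fun i _ => by
            simp [Finset.sum_ite_eq]
    -- inverse of the reduced mass matrix
    have hMhatinv : Mhat⁻¹ = Matrix.diagonal (fun b => (dh b)⁻¹) := by
      rw [hMhatdiag, H2Aux.diag_inv dh (fun b => (hdhpos b).ne')]
    -- reduced input matrix entries
    have hFhatE : ∀ (v : Fin r) (b : Fin p), dh v * Fhat v b = ∑ i, Pi i v * (d i * F i b) := by
      intro v b
      have h1 : Fhat v b = (dh v)⁻¹ * ∑ k, Pi k v * (d k * F k b) := by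
        rw [hFhat, hMhatinv]
        rw [Matrix.mul_apply]
        have h2 : ∀ k, (Matrix.diagonal (fun b => (dh b)⁻¹) * Piᵀ) v k * (M * F) k b
            = (dh v)⁻¹ * (Pi k v * (d k * F k b)) := by
          intro k
          rw [Matrix.diagonal_mul, Matrix.transpose_apply, hM]
          have : (Matrix.diagonal d * F) k b = d k * F k b := Matrix.diagonal_mul d F k b
          rw [this]
          ring
        rw [Finset.sum_congr rfl fun k _ => h2 k, ← Finset.mul_sum]
      rw [h1, ← mul_assoc, mul_inv_cancel₀ (hdhpos v).ne', one_mul]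
    -- rows of Pi sum to one
    have hPiRow : ∀ i, ∑ v, Pi i v = 1 := by
      intro i
      simp [hPi, Finset.sum_ite_eq]
    -- the two steady states coincide
    have hsteady : H * ((Matrix.of fun _ j => d j / ∑ i, d i) : Matrix (Fin n) (Fin n) ℝ) * F
        = Hhat * ((Matrix.of fun _ j => dh j / ∑ i, dh i) : Matrix (Fin r) (Fin r) ℝ) * Fhat := by
      ext a b
      rw [H2Aux.triple_apply, H2Aux.triple_apply]
      simp only [Matrix.of_apply]
      have hL1 : ∑ i, ∑ j, H a i * (d j / ∑ i', d i') * F j b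
          = (∑ i, H a i) * ((∑ j, d j * F j b) / ∑ i', d i') := by
        rw [Finset.sum_mul]
        refine Finset.sum_congr rfl fun i _ => ?_
        rw [Finset.sum_div, Finset.mul_sum]
        refine Finset.sum_congr rfl fun j _ => by ring
      have hR1 : ∑ u, ∑ v, Hhat a u * (dh v / ∑ v', dh v') * Fhat v b
          = (∑ u, Hhat a u) * ((∑ v, dh v * Fhat v b) / ∑ v', dh v') := by
        rw [Finset.sum_mul]
        refine Finset.sum_congr rfl fun u _ => ?_
        rw [Finset.sum_div, Finset.mul_sum]
        refine Finset.sum_congr rfl fun v _ => by ring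
      have hHrow : ∑ u, Hhat a u = ∑ i, H a i := by
        rw [hHhat]
        calc ∑ u, (H * Pi) a u = ∑ u, ∑ i, H a i * Pi i u :=
              Finset.sum_congr rfl fun u _ => Matrix.mul_apply
          _ = ∑ i, ∑ u, H a i * Pi i u := Finset.sum_comm
          _ = ∑ i, H a i := Finset.sum_congr rfl fun i _ => by
              rw [← Finset.mul_sum, hPiRow i, mul_one]
      have hFcol : ∑ v, dh v * Fhat v b = ∑ j, d j * F j b := by
        calc ∑ v, dh v * Fhat v b = ∑ v, ∑ i, Pi i v * (d i * F i b) :=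
              Finset.sum_congr rfl fun v _ => hFhatE v b
          _ = ∑ i, ∑ v, Pi i v * (d i * F i b) := Finset.sum_comm
          _ = ∑ j, d j * F j b := Finset.sum_congr rfl fun i _ => by
              rw [← Finset.sum_mul, hPiRow i, one_mul]
      rw [hL1, hR1, hHrow, hFcol, hSdh]
    -- combined exponential bound on each entry
    set bet := min lam1 lam2 with hbet
    have hbetpos : 0 < bet := lt_min hlam1 hlam2
    have hDb : ∀ (a : Fin q) (b : Fin p) (τ : ℝ), 0 ≤ τ →
        |(H * NormedSpace.exp ((-τ) • L) * F) a b - (Hhat * NormedSpace.exp ((-τ) • Lhat) * Fhat) a b|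
          ≤ (C1 a b + C2 a b) * Real.exp (-(bet * τ)) := by
      intro a b τ hτ
      have h1 := hC1 a b τ hτ
      have h2 := hC2 a b τ hτ
      have e1 : Real.exp (-(lam1 * τ)) ≤ Real.exp (-(bet * τ)) := by
        apply Real.exp_le_exp.mpr
        have : bet * τ ≤ lam1 * τ := mul_le_mul_of_nonneg_right (min_le_left _ _) hτ
        linarith
      have e2 : Real.exp (-(lam2 * τ)) ≤ Real.exp (-(bet * τ)) := by
        apply Real.exp_le_exp.mpr
        have : bet * τ ≤ lam2 * τ := mul_le_mul_of_nonneg_right (min_le_right _ _) hτ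
        linarith
      have htri : |(H * NormedSpace.exp ((-τ) • L) * F) a b - (Hhat * NormedSpace.exp ((-τ) • Lhat) * Fhat) a b|
          ≤ |(H * NormedSpace.exp ((-τ) • L) * F) a b
              - (H * ((Matrix.of fun _ j => d j / ∑ i, d i) : Matrix (Fin n) (Fin n) ℝ) * F) a b|
            + |(Hhat * NormedSpace.exp ((-τ) • Lhat) * Fhat) a b
              - (Hhat * ((Matrix.of fun _ j => dh j / ∑ i, dh i) : Matrix (Fin r) (Fin r) ℝ)
                  * Fhat) a b| := by
        have := abs_sub_le
          ((H * NormedSpace.exp ((-τ) • L) * F) a b)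
          ((H * ((Matrix.of fun _ j => d j / ∑ i, d i) : Matrix (Fin n) (Fin n) ℝ) * F) a b)
          ((Hhat * NormedSpace.exp ((-τ) • Lhat) * Fhat) a b)
        rw [hsteady] at this
        calc |(H * NormedSpace.exp ((-τ) • L) * F) a b - (Hhat * NormedSpace.exp ((-τ) • Lhat) * Fhat) a b|
            ≤ _ + _ := this
          _ = _ := by
                rw [abs_sub_comm ((Hhat * ((Matrix.of fun _ j => dh j / ∑ i, dh i) :
                  Matrix (Fin r) (Fin r) ℝ) * Fhat) a b), hsteady]
      calc |(H * NormedSpace.exp ((-τ) • L) * F) a b - (Hhat * NormedSpace.exp ((-τ) • Lhat) * Fhat) a b|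
          ≤ _ + _ := htri
        _ ≤ C1 a b * Real.exp (-(lam1 * τ)) + C2 a b * Real.exp (-(lam2 * τ)) :=
            add_le_add h1 h2
        _ ≤ C1 a b * Real.exp (-(bet * τ)) + C2 a b * Real.exp (-(bet * τ)) :=
            add_le_add (mul_le_mul_of_nonneg_left e1 (hC1nn a b))
              (mul_le_mul_of_nonneg_left e2 (hC2nn a b))
        _ = (C1 a b + C2 a b) * Real.exp (-(bet * τ)) := by ring
    -- rewrite the integrand as sum of squares of entries
    have hgeq : (fun τ : ℝ =>
        ‖H * NormedSpace.exp ((-τ) • L) * F - Hhat * NormedSpace.exp ((-τ) • Lhat) * Fhat‖ ^ 2)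
        = fun τ : ℝ => ∑ a, ∑ b,
            ((H * NormedSpace.exp ((-τ) • L) * F) a b - (Hhat * NormedSpace.exp ((-τ) • Lhat) * Fhat) a b) ^ 2 := by
      funext τ
      rw [H2Aux.frob_sq]
      exact Finset.sum_congr rfl fun a _ => Finset.sum_congr rfl fun b _ => by
        rw [Matrix.sub_apply]
    rw [hgeq, integrableOn_Ici_iff_integrableOn_Ioi]
    apply integrable_of_isBigO_exp_neg hbetpos
    · -- continuity
      apply Continuous.continuousOn
      have hcont1 : ∀ (a : Fin q) (b : Fin p),
          Continuous fun τ : ℝ => (H * NormedSpace.exp ((-τ) • L) * F) a b := by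
        intro a b
        have hfe : (fun τ : ℝ => (H * NormedSpace.exp ((-τ) • L) * F) a b)
            = fun τ => ∑ i, ∑ j, H a i * NormedSpace.exp ((-τ) • L) i j * F j b :=
          funext fun τ => H2Aux.triple_apply H _ F a b
        rw [hfe]
        apply continuous_finset_sum
        intro i _
        apply continuous_finset_sum
        intro j _
        exact (continuous_const.mul (H2Aux.continuous_expEntry L i j)).mul continuous_const
      have hcont2 : ∀ (a : Fin q) (b : Fin p),
          Continuous fun τ : ℝ => (Hhat * NormedSpace.exp ((-τ) • Lhat) * Fhat) a b := by
        intro a b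
        have hfe : (fun τ : ℝ => (Hhat * NormedSpace.exp ((-τ) • Lhat) * Fhat) a b)
            = fun τ => ∑ i, ∑ j, Hhat a i * NormedSpace.exp ((-τ) • Lhat) i j * Fhat j b :=
          funext fun τ => H2Aux.triple_apply Hhat _ Fhat a b
        rw [hfe]
        apply continuous_finset_sum
        intro i _
        apply continuous_finset_sum
        intro j _
        exact (continuous_const.mul (H2Aux.continuous_expEntry Lhat i j)).mul continuous_const
      apply continuous_finset_sum
      intro a _
      apply continuous_finset_sum
      intro b _
      exact ((hcont1 a b).sub (hcont2 a b)).pow 2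
    · -- big-O bound
      rw [Asymptotics.isBigO_iff]
      refine ⟨∑ a, ∑ b, (C1 a b + C2 a b) ^ 2, ?_⟩
      filter_upwards [Filter.eventually_ge_atTop (0:ℝ)] with τ hτ
      have hsum_nn : (0:ℝ) ≤ ∑ a, ∑ b,
          ((H * NormedSpace.exp ((-τ) • L) * F) a b - (Hhat * NormedSpace.exp ((-τ) • Lhat) * Fhat) a b) ^ 2 :=
        Finset.sum_nonneg fun a _ => Finset.sum_nonneg fun b _ => sq_nonneg _
      rw [Real.norm_eq_abs, Real.norm_eq_abs, abs_of_nonneg hsum_nn,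
        abs_of_nonneg (Real.exp_pos _).le]
      have hterm : ∀ (a : Fin q) (b : Fin p),
          ((H * NormedSpace.exp ((-τ) • L) * F) a b - (Hhat * NormedSpace.exp ((-τ) • Lhat) * Fhat) a b) ^ 2
            ≤ (C1 a b + C2 a b) ^ 2 * Real.exp (-bet * τ) := by
        intro a b
        have habs := hDb a b τ hτ
        have hCnn : 0 ≤ C1 a b + C2 a b := add_nonneg (hC1nn a b) (hC2nn a b)
        have h4 : |(H * NormedSpace.exp ((-τ) • L) * F) a b
            - (Hhat * NormedSpace.exp ((-τ) • Lhat) * Fhat) a b| ^ 2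
            ≤ ((C1 a b + C2 a b) * Real.exp (-(bet * τ))) ^ 2 :=
          pow_le_pow_left₀ (abs_nonneg _) habs 2
        rw [sq_abs] at h4
        have he1 : Real.exp (-(bet * τ)) ≤ 1 := by
          rw [Real.exp_le_one_iff]
          have : 0 ≤ bet * τ := mul_nonneg hbetpos.le hτ
          linarith
        have he0 : 0 < Real.exp (-(bet * τ)) := Real.exp_pos _
        have h5 : ((C1 a b + C2 a b) * Real.exp (-(bet * τ))) ^ 2
            ≤ (C1 a b + C2 a b) ^ 2 * Real.exp (-(bet * τ)) := by
          nlinarith [sq_nonneg (C1 a b + C2 a b)]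
        have h6 : (-bet * τ) = -(bet * τ) := by ring
        rw [h6]
        exact h4.trans h5
      calc ∑ a, ∑ b,
          ((H * NormedSpace.exp ((-τ) • L) * F) a b - (Hhat * NormedSpace.exp ((-τ) • Lhat) * Fhat) a b) ^ 2
          ≤ ∑ a, ∑ b, (C1 a b + C2 a b) ^ 2 * Real.exp (-bet * τ) :=
            Finset.sum_le_sum fun a _ => Finset.sum_le_sum fun b _ => hterm a b
        _ = (∑ a, ∑ b, (C1 a b + C2 a b) ^ 2) * Real.exp (-bet * τ) := by
            rw [Finset.sum_mul]
            exact Finset.sum_congr rfl fun a _ => by rw [Finset.sum_mul]
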